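/- If a bipartite multigraph G with parts A and B is the union of 2n − 1 matchings M₁, …, M_{2n−1}, each of size n, then G contains a rainbow matching of size n. -/

import Mathlib

/-- A set of edges of a bipartite multigraph with parts `A` and `B` is a matching
if any two distinct edges differ in both coordinates. -/
def IsMatching {A B : Type*} (S : Finset (A × B)) : Prop :=
  ∀ e ∈ S, ∀ f ∈ S, e ≠ f → e.1 ≠ f.1 ∧ e.2 ≠ f.2

/-- Given matchings `M 0, …, M (N-1)`, a rainbow matching of size `s` consists of `s`
edges coming from pairwise distinct matchings, any two of which differ in both
coordinates. -/
def HasRainbowMatching {A B : Type*} {N : ℕ} (M : Fin N → Finset (A × B)) (s : ℕ) : Prop :=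
  ∃ (c : Fin s → Fin N) (e : Fin s → A × B),
    Function.Injective c ∧ (∀ i, e i ∈ M (c i)) ∧
      ∀ i j, i ≠ j → (e i).1 ≠ (e j).1 ∧ (e i).2 ≠ (e j).2

namespace DriskoAux

open Finset

/-- A rainbow alternating path in the abstract color digraph:
`IsPath E u l cl` means starting at vertex `u` (`none` = source), we pass through
the nodes of `l` and exit to the sink, with the `i`-th step using color `cl i`. -/
def IsPath {ν κ : Type*} (E : κ → Finset (Option ν × Option ν)) :
    Option ν → List ν → List κ → Prop
  | _, _, [] => False
  | u, [], [c] => (u, none) ∈ E c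
  | _, [], _ :: _ :: _ => False
  | u, v :: l, c :: cl => (u, some v) ∈ E c ∧ IsPath E (some v) l cl

lemma lift_path {ν κ : Type*} [DecidableEq ν]
    (E : κ → Finset (Option ν × Option ν)) (v : ν) (c₀ : κ)
    (hexit : ((some v : Option ν), (none : Option ν)) ∈ E c₀) :
    ∀ (l : List ν) (cl : List κ) (u : Option ν),
      IsPath (fun c => ((E c).filter (fun y => y.1 ≠ some v)).image
        (fun y => (y.1, if y.2 = some v then none else y.2))) u l cl →
      IsPath E u l cl ∨ IsPath E u (l ++ [v]) (cl ++ [c₀]) := by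
  intro l
  induction l with
  | nil =>
    intro cl u h
    match cl with
    | [] => exact absurd h (by simp [IsPath])
    | c :: c' :: cl' => exact absurd h (by simp [IsPath])
    | [c] =>
      simp only [IsPath, Finset.mem_image, Finset.mem_filter] at h
      obtain ⟨y, ⟨hy, hy1⟩, heq⟩ := h
      have h1 : y.1 = u := (Prod.mk.injEq _ _ _ _ ▸ heq).1
      have h2 : (if y.2 = some v then none else y.2) = (none : Option ν) :=
        (Prod.mk.injEq _ _ _ _ ▸ heq).2
      by_cases hcv : y.2 = some v
      · right
        have : (u, some v) ∈ E c := by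
          have : y = (u, some v) := Prod.ext h1 hcv
          rwa [this] at hy
        show (u, some v) ∈ E c ∧ IsPath E (some v) [] [c₀]
        exact ⟨this, hexit⟩
      · left
        rw [if_neg hcv] at h2
        have : y = (u, none) := Prod.ext h1 h2
        show (u, none) ∈ E c
        rwa [this] at hy
  | cons w l' ihl =>
    intro cl u h
    match cl with
    | [] => exact absurd h (by simp [IsPath])
    | c :: cl' =>
      simp only [IsPath] at h
      obtain ⟨h1, h2⟩ := h
      simp only [Finset.mem_image, Finset.mem_filter] at h1
      obtain ⟨y, ⟨hy, _⟩, heq⟩ := h1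
      have hy1 : y.1 = u := (Prod.mk.injEq _ _ _ _ ▸ heq).1
      have hy2 : (if y.2 = some v then none else y.2) = some w :=
        (Prod.mk.injEq _ _ _ _ ▸ heq).2
      have hyv : y.2 = some w := by
        by_cases hcv : y.2 = some v
        · rw [if_pos hcv] at hy2; exact absurd hy2 (by simp)
        · rwa [if_neg hcv] at hy2
      have h1' : (u, some w) ∈ E c := by
        have : y = (u, some w) := Prod.ext hy1 hyv
        rwa [this] at hy
      rcases ihl cl' (some w) h2 with h' | h'
      · exact Or.inl (by simp only [IsPath]; exact ⟨h1', h'⟩)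
      · exact Or.inr (by simp only [List.cons_append, IsPath]; exact ⟨h1', h'⟩)


lemma abstract_path {ν κ : Type*} [DecidableEq ν] [DecidableEq κ] :
    ∀ (s : ℕ) (V : Finset ν) (C : Finset κ) (E : κ → Finset (Option ν × Option ν)),
      V.card = s → C.card = s + 1 →
      (∀ c ∈ C, s + 1 ≤ (E c).card) →
      (∀ c ∈ C, ∀ x ∈ E c, ∀ v : ν, (x.1 = some v → v ∈ V) ∧ (x.2 = some v → v ∈ V)) →
      (∀ c ∈ C, ∀ x ∈ E c, ∀ y ∈ E c, x.1 = y.1 → x.1 ≠ none → x = y) →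
      (∀ c ∈ C, ∀ x ∈ E c, ∀ y ∈ E c, x.2 = y.2 → x.2 ≠ none → x = y) →
      ∃ (l : List ν) (cl : List κ), l.Nodup ∧ cl.Nodup ∧ (∀ v ∈ l, v ∈ V) ∧
        (∀ c ∈ cl, c ∈ C) ∧ IsPath E none l cl := by
  intro s
  induction s with
  | zero =>
    intro V C E hV hC hcard hVmem _ _
    obtain ⟨c, hc⟩ : C.Nonempty := Finset.card_pos.mp (by omega)
    obtain ⟨x, hx⟩ : (E c).Nonempty := Finset.card_pos.mp (by have := hcard c hc; omega)
    have hVempty : V = ∅ := Finset.card_eq_zero.mp hV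
    have hx1 : x.1 = none := by
      cases h : x.1 with
      | none => rfl
      | some v =>
        have := (hVmem c hc x hx v).1 h
        simp [hVempty] at this
    have hx2 : x.2 = none := by
      cases h : x.2 with
      | none => rfl
      | some v =>
        have := (hVmem c hc x hx v).2 h
        simp [hVempty] at this
    refine ⟨[], [c], by simp, by simp, by simp, by simpa, ?_⟩
    show (none, none) ∈ E c
    have : x = (none, none) := Prod.ext hx1 hx2
    rwa [this] at hx
  | succ s ih =>
    intro V C E hV hC hcard hVmem hout hin
    by_cases hwin : ∃ c ∈ C, ((none : Option ν), (none : Option ν)) ∈ E c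
    · obtain ⟨c, hc, hcc⟩ := hwin
      exact ⟨[], [c], by simp, by simp, by simp, by simpa, hcc⟩
    push_neg at hwin
    obtain ⟨c₀, hc₀⟩ : C.Nonempty := Finset.card_pos.mp (by omega)
    -- find an exit edge of color c₀
    have hexit : ∃ x ∈ E c₀, x.2 = (none : Option ν) := by
      by_contra hno
      push_neg at hno
      have hinj : Set.InjOn Prod.snd (E c₀ : Set (Option ν × Option ν)) := by
        intro x hx y hy hxy
        exact hin c₀ hc₀ x hx y hy hxy (hno x hx)
      have hsub : (E c₀).image Prod.snd ⊆ V.image some := by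
        intro o ho
        obtain ⟨x, hx, hxo⟩ := Finset.mem_image.mp ho
        cases h : x.2 with
        | none => exact absurd h (hno x hx)
        | some v =>
          have := (hVmem c₀ hc₀ x hx v).2 h
          exact Finset.mem_image.mpr ⟨v, this, by rw [← hxo, h]⟩
      have h1 : (E c₀).card = ((E c₀).image Prod.snd).card :=
        (Finset.card_image_of_injOn hinj).symm
      have h2 : ((E c₀).image Prod.snd).card ≤ (V.image some).card :=
        Finset.card_le_card hsub
      have h3 : (V.image some).card ≤ V.card := Finset.card_image_le
      have := hcard c₀ hc₀
      omega
    obtain ⟨x, hx, hx2⟩ := hexit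
    obtain ⟨v, hv1⟩ : ∃ v, x.1 = some v := by
      cases h : x.1 with
      | none =>
        have hxe : x = ((none : Option ν), (none : Option ν)) := Prod.ext h hx2
        rw [hxe] at hx
        exact absurd hx (hwin c₀ hc₀)
      | some v => exact ⟨v, rfl⟩
    have hvV : v ∈ V := (hVmem c₀ hc₀ x hx v).1 hv1
    have hexit' : ((some v : Option ν), (none : Option ν)) ∈ E c₀ := by
      have : x = (some v, none) := Prod.ext hv1 hx2
      rwa [this] at hx
    set E' : κ → Finset (Option ν × Option ν) := fun c =>
      ((E c).filter (fun y => y.1 ≠ some v)).image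
        (fun y => (y.1, if y.2 = some v then none else y.2)) with hE'
    -- InjOn of the redirect map on the filtered sets
    have hinjOn : ∀ c ∈ C, Set.InjOn (fun y : Option ν × Option ν =>
        (y.1, if y.2 = some v then none else y.2))
        (((E c).filter (fun y => y.1 ≠ some v)) : Set (Option ν × Option ν)) := by
      intro c hc y hy z hz heq
      simp only [Finset.coe_filter, Set.mem_setOf_eq] at hy hz
      obtain ⟨hyE, hyv⟩ := hy
      obtain ⟨hzE, hzv⟩ := hz
      have h1 : y.1 = z.1 := (Prod.mk.injEq _ _ _ _ ▸ heq).1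
      have h2 : (if y.2 = some v then none else y.2) = (if z.2 = some v then none else z.2) :=
        (Prod.mk.injEq _ _ _ _ ▸ heq).2
      by_cases hy2 : y.2 = some v
      · by_cases hz2 : z.2 = some v
        · exact hin c hc y hyE z hzE (hy2.trans hz2.symm) (by simp [hy2])
        · rw [if_pos hy2, if_neg hz2] at h2
          -- z.2 = none
          have hz2n : z.2 = none := h2.symm
          cases hz1 : z.1 with
          | none =>
            have hze : z = ((none : Option ν), (none : Option ν)) := Prod.ext hz1 hz2n
            rw [hze] at hzE
            exact absurd hzE (hwin c hc)
          | some w =>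
            exact hout c hc y hyE z hzE h1 (by rw [h1, hz1]; simp)
      · by_cases hz2 : z.2 = some v
        · rw [if_neg hy2, if_pos hz2] at h2
          have hy2n : y.2 = none := h2
          cases hy1 : y.1 with
          | none =>
            have hye : y = ((none : Option ν), (none : Option ν)) := Prod.ext hy1 hy2n
            rw [hye] at hyE
            exact absurd hyE (hwin c hc)
          | some w =>
            exact hout c hc y hyE z hzE h1 (by rw [hy1]; simp)
        · rw [if_neg hy2, if_neg hz2] at h2
          by_cases hy2n : y.2 = none
          · cases hy1 : y.1 with
            | none =>
              have hye : y = ((none : Option ν), (none : Option ν)) := Prod.ext hy1 hy2n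
              rw [hye] at hyE
              exact absurd hyE (hwin c hc)
            | some w => exact hout c hc y hyE z hzE h1 (by rw [hy1]; simp)
          · exact hin c hc y hyE z hzE h2 hy2n
    have hcard' : ∀ c ∈ C.erase c₀, s + 1 ≤ (E' c).card := by
      intro c hc
      have hcC : c ∈ C := Finset.mem_of_mem_erase hc
      have hone : ((E c).filter (fun y => y.1 = some v)).card ≤ 1 := by
        apply Finset.card_le_one.mpr
        intro y hy z hz
        simp only [Finset.mem_filter] at hy hz
        exact hout c hcC y hy.1 z hz.1 (hy.2.trans hz.2.symm) (by rw [hy.2]; simp)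
      have hsplit := Finset.card_filter_add_card_filter_not
        (s := E c) (p := fun y => y.1 = some v)
      have himg : (E' c).card = ((E c).filter (fun y => y.1 ≠ some v)).card := by
        rw [hE']
        exact Finset.card_image_of_injOn (hinjOn c hcC)
      have := hcard c hcC
      simp only [ne_eq] at himg ⊢
      omega
    have hVmem' : ∀ c ∈ C.erase c₀, ∀ x ∈ E' c, ∀ w : ν,
        (x.1 = some w → w ∈ V.erase v) ∧ (x.2 = some w → w ∈ V.erase v) := by
      intro c hc x hx w
      have hcC : c ∈ C := Finset.mem_of_mem_erase hc
      simp only [hE', Finset.mem_image, Finset.mem_filter] at hx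
      obtain ⟨y, ⟨hyE, hyv⟩, heq⟩ := hx
      have h1 : y.1 = x.1 := (Prod.mk.injEq _ _ _ _ ▸ heq).1
      have h2 : (if y.2 = some v then none else y.2) = x.2 :=
        (Prod.mk.injEq _ _ _ _ ▸ heq).2
      constructor
      · intro hxw
        refine Finset.mem_erase.mpr ⟨?_, (hVmem c hcC y hyE w).1 (h1.trans hxw)⟩
        intro hwv
        exact hyv (by rw [h1, hxw, hwv])
      · intro hxw
        by_cases hy2 : y.2 = some v
        · rw [if_pos hy2] at h2; exact absurd (h2.trans hxw) (by simp)
        · rw [if_neg hy2] at h2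
          refine Finset.mem_erase.mpr ⟨?_, (hVmem c hcC y hyE w).2 (h2.trans hxw)⟩
          intro hwv
          exact hy2 (by rw [h2, hxw, hwv])
    have hout' : ∀ c ∈ C.erase c₀, ∀ x ∈ E' c, ∀ y ∈ E' c,
        x.1 = y.1 → x.1 ≠ none → x = y := by
      intro c hc x hx y hy hxy hxn
      have hcC : c ∈ C := Finset.mem_of_mem_erase hc
      simp only [hE', Finset.mem_image, Finset.mem_filter] at hx hy
      obtain ⟨a, ⟨haE, hav⟩, haeq⟩ := hx
      obtain ⟨b, ⟨hbE, hbv⟩, hbeq⟩ := hy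
      have ha1 : a.1 = x.1 := (Prod.mk.injEq _ _ _ _ ▸ haeq).1
      have hb1 : b.1 = y.1 := (Prod.mk.injEq _ _ _ _ ▸ hbeq).1
      have : a = b := hout c hcC a haE b hbE (by rw [ha1, hb1, hxy]) (by rw [ha1]; exact hxn)
      rw [← haeq, ← hbeq, this]
    have hin' : ∀ c ∈ C.erase c₀, ∀ x ∈ E' c, ∀ y ∈ E' c,
        x.2 = y.2 → x.2 ≠ none → x = y := by
      intro c hc x hx y hy hxy hxn
      have hcC : c ∈ C := Finset.mem_of_mem_erase hc
      simp only [hE', Finset.mem_image, Finset.mem_filter] at hx hy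
      obtain ⟨a, ⟨haE, hav⟩, haeq⟩ := hx
      obtain ⟨b, ⟨hbE, hbv⟩, hbeq⟩ := hy
      have ha2 : (if a.2 = some v then none else a.2) = x.2 := (Prod.mk.injEq _ _ _ _ ▸ haeq).2
      have hb2 : (if b.2 = some v then none else b.2) = y.2 := (Prod.mk.injEq _ _ _ _ ▸ hbeq).2
      have ha2' : a.2 = x.2 := by
        by_cases h : a.2 = some v
        · rw [if_pos h] at ha2; exact absurd (ha2 ▸ hxn) (by simp)
        · rwa [if_neg h] at ha2
      have hb2' : b.2 = y.2 := by
        by_cases h : b.2 = some v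
        · rw [if_pos h] at hb2
          exact absurd (hb2 ▸ (hxy ▸ hxn)) (by simp)
        · rwa [if_neg h] at hb2
      have : a = b := hin c hcC a haE b hbE (by rw [ha2', hb2', hxy]) (by rw [ha2']; exact hxn)
      rw [← haeq, ← hbeq, this]
    obtain ⟨l, cl, hl, hcl, hlV, hclC, hpath⟩ :=
      ih (V.erase v) (C.erase c₀) E'
        (by rw [Finset.card_erase_of_mem hvV, hV]; omega)
        (by rw [Finset.card_erase_of_mem hc₀, hC]; omega)
        hcard' hVmem' hout' hin'
    rcases lift_path E v c₀ hexit' l cl none hpath with h | h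
    · exact ⟨l, cl, hl, hcl,
        fun w hw => Finset.mem_of_mem_erase (hlV w hw),
        fun c hc => Finset.mem_of_mem_erase (hclC c hc), h⟩
    · have hvl : v ∉ l := fun hvl => (Finset.mem_erase.mp (hlV v hvl)).1 rfl
      have hc₀cl : c₀ ∉ cl := fun hcc => (Finset.mem_erase.mp (hclC c₀ hcc)).1 rfl
      refine ⟨l ++ [v], cl ++ [c₀], ?_, ?_, ?_, ?_, h⟩
      · exact hl.append (List.nodup_singleton v)
          (fun a ha hb => by simp at hb; subst hb; exact hvl ha)
      · exact hcl.append (List.nodup_singleton c₀)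
          (fun a ha hb => by simp at hb; subst hb; exact hc₀cl ha)
      · intro w hw
        rcases List.mem_append.mp hw with h' | h'
        · exact Finset.mem_of_mem_erase (hlV w h')
        · simp at h'; subst h'; exact hvV
      · intro c hc
        rcases List.mem_append.mp hc with h' | h'
        · exact Finset.mem_of_mem_erase (hclC c h')
        · simp at h'; subst h'; exact hc₀


open Classical in
noncomputable def pA {A B ι : Type*} (S : Finset (ι × A × B)) (e : A × B) :
    Option (ι × A × B) :=
  if h : ∃ p, p ∈ S ∧ p.2.1 = e.1 then some h.choose else none

open Classical in
noncomputable def pB {A B ι : Type*} (S : Finset (ι × A × B)) (e : A × B) :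
    Option (ι × A × B) :=
  if h : ∃ p, p ∈ S ∧ p.2.2 = e.2 then some h.choose else none

lemma pA_some {A B ι : Type*} {S : Finset (ι × A × B)} {e : A × B} {p : ι × A × B}
    (h : pA S e = some p) : p ∈ S ∧ p.2.1 = e.1 := by
  rw [pA] at h
  by_cases hh : ∃ q, q ∈ S ∧ q.2.1 = e.1
  · rw [dif_pos hh] at h
    obtain rfl : hh.choose = p := Option.some.inj h
    exact hh.choose_spec
  · rw [dif_neg hh] at h
    cases h

lemma pA_none {A B ι : Type*} {S : Finset (ι × A × B)} {e : A × B}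
    (h : pA S e = none) : ∀ p ∈ S, p.2.1 ≠ e.1 := by
  rw [pA] at h
  by_cases hh : ∃ q, q ∈ S ∧ q.2.1 = e.1
  · rw [dif_pos hh] at h
    cases h
  · intro p hp hpe
    exact hh ⟨p, hp, hpe⟩

lemma pB_some {A B ι : Type*} {S : Finset (ι × A × B)} {e : A × B} {p : ι × A × B}
    (h : pB S e = some p) : p ∈ S ∧ p.2.2 = e.2 := by
  rw [pB] at h
  by_cases hh : ∃ q, q ∈ S ∧ q.2.2 = e.2
  · rw [dif_pos hh] at h
    obtain rfl : hh.choose = p := Option.some.inj h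
    exact hh.choose_spec
  · rw [dif_neg hh] at h
    cases h

lemma pB_none {A B ι : Type*} {S : Finset (ι × A × B)} {e : A × B}
    (h : pB S e = none) : ∀ p ∈ S, p.2.2 ≠ e.2 := by
  rw [pB] at h
  by_cases hh : ∃ q, q ∈ S ∧ q.2.2 = e.2
  · rw [dif_pos hh] at h
    cases h
  · intro p hp hpe
    exact hh ⟨p, hp, hpe⟩

noncomputable def Edges {A B ι : Type*} [DecidableEq A] [DecidableEq B] [DecidableEq ι]
    (S : Finset (ι × A × B)) (M : ι → Finset (A × B)) (c : ι) :
    Finset (Option (ι × A × B) × Option (ι × A × B)) :=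
  (M c).image (fun e => (pA S e, pB S e))

lemma build_T {A B ι : Type*} [DecidableEq A] [DecidableEq B] [DecidableEq ι]
    (S : Finset (ι × A × B)) (M : ι → Finset (A × B))
    (hS_dist : ∀ p ∈ S, ∀ q ∈ S, p ≠ q → p.1 ≠ q.1 ∧ p.2.1 ≠ q.2.1 ∧ p.2.2 ≠ q.2.2) :
    ∀ (l : List (ι × A × B)) (cl : List ι) (u : Option (ι × A × B)),
      IsPath (Edges S M) u l cl → l.Nodup → (∀ p ∈ l, p ∈ S) → cl.Nodup →
      (∀ p, u = some p → p ∈ S ∧ p ∉ l) →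
      ∃ (T : Finset (ι × A × B)) (afree : A) (bfree : B),
        T.card = l.length + 1 ∧
        (∀ q ∈ T, q.2 ∈ M q.1) ∧
        (∀ q ∈ T, q.1 ∈ cl) ∧
        (∀ q ∈ T, ∀ q' ∈ T, q ≠ q' → q.1 ≠ q'.1 ∧ q.2.1 ≠ q'.2.1 ∧ q.2.2 ≠ q'.2.2) ∧
        (T.image (fun q => q.2.1) =
          insert (u.elim afree (fun p => p.2.1))
            (l.toFinset.image (fun p => p.2.1))) ∧
        (u = none → ∀ r ∈ S, r.2.1 ≠ afree) ∧
        (T.image (fun q => q.2.2) = insert bfree (l.toFinset.image (fun p => p.2.2))) ∧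
        (∀ r ∈ S, r.2.2 ≠ bfree) := by
  intro l
  induction l with
  | nil =>
    intro cl u hpath _ _ _ hu
    match cl with
    | [] => exact absurd hpath (by simp [IsPath])
    | c :: c' :: cl' => exact absurd hpath (by simp [IsPath])
    | [c] =>
      have hedge : (u, (none : Option (ι × A × B))) ∈ Edges S M c := hpath
      obtain ⟨e, heM, heq⟩ := Finset.mem_image.mp hedge
      have he1 : pA S e = u := (Prod.mk.injEq _ _ _ _ ▸ heq).1
      have he2 : pB S e = none := (Prod.mk.injEq _ _ _ _ ▸ heq).2
      have haof : u.elim e.1 (fun p => p.2.1) = e.1 := by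
        cases u with
        | none => rfl
        | some p => exact (pA_some he1).2
      refine ⟨{(c, e)}, e.1, e.2, by simp, by simp [heM], by simp, ?_, ?_, ?_, ?_, ?_⟩
      · intro q hq q' hq' hne
        simp only [Finset.mem_singleton] at hq hq'
        exact absurd (hq.trans hq'.symm) hne
      · rw [haof]; simp
      · intro hun
        rw [hun] at he1
        exact pA_none he1
      · simp
      · exact pB_none he2
  | cons p l' ihl =>
    intro cl u hpath hnodup hmem hclnodup hu
    match cl with
    | [] => exact absurd hpath (by simp [IsPath])
    | c :: cl' =>
      simp only [IsPath] at hpath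
      obtain ⟨hedge, hrest⟩ := hpath
      obtain ⟨e, heM, heq⟩ := Finset.mem_image.mp hedge
      have he1 : pA S e = u := (Prod.mk.injEq _ _ _ _ ▸ heq).1
      have he2 : pB S e = some p := (Prod.mk.injEq _ _ _ _ ▸ heq).2
      have hpS : p ∈ S := hmem p (by simp)
      have hpe2 : p.2.2 = e.2 := (pB_some he2).2
      have hnod' := (List.nodup_cons.mp hnodup).2
      have hpnotl' : p ∉ l' := (List.nodup_cons.mp hnodup).1
      have hclnod' := (List.nodup_cons.mp hclnodup).2
      have hcnotcl' : c ∉ cl' := (List.nodup_cons.mp hclnodup).1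
      obtain ⟨T', afree', bfree', hcard', hmemM', hmemcl', hdist', himgA', _, himgB', hbfree'⟩ :=
        ihl cl' (some p) hrest hnod' (fun q hq => hmem q (List.mem_cons_of_mem _ hq))
          hclnod' (fun q hq => by
            obtain rfl : p = q := Option.some.inj hq
            exact ⟨hpS, hpnotl'⟩)
      have haof : u.elim e.1 (fun p => p.2.1) = e.1 := by
        cases u with
        | none => rfl
        | some p₀ => exact (pA_some he1).2
      -- the new edge differs from everything in T'
      have key : ∀ q' ∈ T', c ≠ q'.1 ∧ e.1 ≠ q'.2.1 ∧ e.2 ≠ q'.2.2 := by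
        intro q' hq'
        refine ⟨fun hcq => hcnotcl' (hcq ▸ hmemcl' q' hq'), ?_, ?_⟩
        · -- a-coordinates
          have hq'A : q'.2.1 ∈ insert p.2.1 (l'.toFinset.image (fun r => r.2.1)) := by
            have := Finset.mem_image_of_mem (fun q => q.2.1) hq'
            rw [himgA'] at this
            exact this
          rw [Finset.mem_insert] at hq'A
          cases u with
          | none =>
            have hfree := pA_none he1
            rcases hq'A with h | h
            · rw [h]; exact fun hh => hfree p hpS hh.symm
            · obtain ⟨r, hr, hre⟩ := Finset.mem_image.mp h
              rw [← hre]
              exact fun hh => hfree r (hmem r (List.mem_cons_of_mem _ (List.mem_toFinset.mp hr))) hh.symm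
          | some p₀ =>
            obtain ⟨hp₀S, hp₀nl⟩ := hu p₀ rfl
            have he1' : e.1 = p₀.2.1 := ((pA_some he1).2).symm
            rcases hq'A with h | h
            · rw [he1', h]
              have : p₀ ≠ p := fun hh => hp₀nl (hh ▸ List.mem_cons_self (a := p) (l := l'))
              exact (hS_dist p₀ hp₀S p hpS this).2.1
            · obtain ⟨r, hr, hre⟩ := Finset.mem_image.mp h
              rw [he1', ← hre]
              have hrS : r ∈ S := hmem r (List.mem_cons_of_mem _ (List.mem_toFinset.mp hr))
              have : p₀ ≠ r := fun hh =>
                hp₀nl (hh ▸ List.mem_cons_of_mem _ (List.mem_toFinset.mp hr))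
              exact (hS_dist p₀ hp₀S r hrS this).2.1
        · -- b-coordinates
          have hq'B : q'.2.2 ∈ insert bfree' (l'.toFinset.image (fun r => r.2.2)) := by
            rw [← himgB']
            exact Finset.mem_image_of_mem _ hq'
          rw [Finset.mem_insert] at hq'B
          rcases hq'B with h | h
          · rw [h, ← hpe2]
            exact hbfree' p hpS
          · obtain ⟨r, hr, hre⟩ := Finset.mem_image.mp h
            rw [← hre, ← hpe2]
            have hrS : r ∈ S := hmem r (List.mem_cons_of_mem _ (List.mem_toFinset.mp hr))
            have : p ≠ r := fun hh => hpnotl' (hh ▸ List.mem_toFinset.mp hr)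
            exact (hS_dist p hpS r hrS this).2.2
      have hnotin : (c, e) ∉ T' := fun h => hcnotcl' (hmemcl' _ h)
      refine ⟨insert (c, e) T', e.1, bfree', ?_, ?_, ?_, ?_, ?_, ?_, ?_, hbfree'⟩
      · rw [Finset.card_insert_of_notMem hnotin, hcard']
        simp
      · intro q hq
        rcases Finset.mem_insert.mp hq with h | h
        · rw [h]; exact heM
        · exact hmemM' q h
      · intro q hq
        rcases Finset.mem_insert.mp hq with h | h
        · rw [h]; exact List.mem_cons_self (a := c) (l := cl')
        · exact List.mem_cons_of_mem _ (hmemcl' q h)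
      · intro q hq q' hq' hne
        rcases Finset.mem_insert.mp hq with h | h <;> rcases Finset.mem_insert.mp hq' with h' | h'
        · exact absurd (h.trans h'.symm) hne
        · rw [h]; exact key q' h'
        · rw [h']
          obtain ⟨k1, k2, k3⟩ := key q h
          exact ⟨k1.symm, k2.symm, k3.symm⟩
        · exact hdist' q h q' h' hne
      · rw [Finset.image_insert, himgA', haof]
        simp only [List.toFinset_cons, Finset.image_insert, Option.elim_some]
      · intro hun
        rw [hun] at he1
        exact pA_none he1
      · rw [Finset.image_insert, himgB', ← hpe2]
        simp only [List.toFinset_cons, Finset.image_insert]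
        exact Finset.insert_comm _ _ _


theorem hasRM_zero {A B : Type*} {N : ℕ} (M : Fin N → Finset (A × B)) :
    HasRainbowMatching M 0 :=
  ⟨Fin.elim0, Fin.elim0, fun {a} => a.elim0, fun i => i.elim0, fun i => i.elim0⟩

theorem hasRM_mono {A B : Type*} {N : ℕ} {M : Fin N → Finset (A × B)} {s t : ℕ}
    (h : HasRainbowMatching M t) (hst : s ≤ t) : HasRainbowMatching M s := by
  obtain ⟨c, e, hc, he, hd⟩ := h
  refine ⟨c ∘ Fin.castLE hst, e ∘ Fin.castLE hst,
    hc.comp (Fin.castLE_injective hst), fun i => he _, fun i j hij => hd _ _ ?_⟩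
  exact fun hh => hij (Fin.castLE_injective hst hh)

theorem hasRM_of_finset {A B : Type*} {N : ℕ} {M : Fin N → Finset (A × B)} {s : ℕ}
    (S : Finset (Fin N × A × B)) (hcard : S.card = s)
    (hmem : ∀ p ∈ S, p.2 ∈ M p.1)
    (hdist : ∀ p ∈ S, ∀ q ∈ S, p ≠ q → p.1 ≠ q.1 ∧ p.2.1 ≠ q.2.1 ∧ p.2.2 ≠ q.2.2) :
    HasRainbowMatching M s := by
  classical
  have g := (S.equivFinOfCardEq hcard).symm
  have hFS : ∀ i, (g i : Fin N × A × B) ∈ S := fun i => (g i).2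
  have hFinj : ∀ i j, (g i : Fin N × A × B) = (g j : Fin N × A × B) → i = j :=
    fun i j h => g.injective (Subtype.ext h)
  refine ⟨fun i => (g i : Fin N × A × B).1, fun i => (g i : Fin N × A × B).2,
    ?_, fun i => hmem _ (hFS i), fun i j hij => ?_⟩
  · intro i j hcij
    by_contra hne
    have hFne : (g i : Fin N × A × B) ≠ (g j : Fin N × A × B) :=
      fun hh => hne (hFinj _ _ hh)
    exact (hdist _ (hFS i) _ (hFS j) hFne).1 hcij
  · have hFne : (g i : Fin N × A × B) ≠ (g j : Fin N × A × B) :=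
      fun hh => hij (hFinj _ _ hh)
    have h2 := hdist _ (hFS i) _ (hFS j) hFne
    exact ⟨h2.2.1, h2.2.2⟩

theorem finset_of_hasRM {A B : Type*} {N : ℕ} {M : Fin N → Finset (A × B)} {s : ℕ}
    (h : HasRainbowMatching M s) :
    ∃ S : Finset (Fin N × A × B), S.card = s ∧ (∀ p ∈ S, p.2 ∈ M p.1) ∧
      (∀ p ∈ S, ∀ q ∈ S, p ≠ q → p.1 ≠ q.1 ∧ p.2.1 ≠ q.2.1 ∧ p.2.2 ≠ q.2.2) := by
  classical
  obtain ⟨c, e, hc, he, hd⟩ := h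
  have hFinj : Function.Injective (fun i => (c i, e i) : Fin s → Fin N × A × B) := by
    intro i j hij
    exact hc (congrArg Prod.fst hij)
  refine ⟨Finset.univ.image (fun i => (c i, e i)), ?_, ?_, ?_⟩
  · rw [Finset.card_image_of_injective _ hFinj, Finset.card_univ, Fintype.card_fin]
  · intro p hp
    obtain ⟨i, _, rfl⟩ := Finset.mem_image.mp hp
    exact he i
  · intro p hp q hq hpq
    obtain ⟨i, _, rfl⟩ := Finset.mem_image.mp hp
    obtain ⟨j, _, rfl⟩ := Finset.mem_image.mp hq
    have hij : i ≠ j := fun hh => hpq (hh ▸ rfl)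
    have h2 := hd i j hij
    exact ⟨fun hcc => hij (hc hcc), h2.1, h2.2⟩


end DriskoAux

open DriskoAux in
/-- Drisko's theorem: if a bipartite multigraph is the union of `2n - 1` matchings of
size `n`, then it has a rainbow matching of size `n`. -/
theorem drisko {A B : Type*} (n : ℕ)
    (M : Fin (2 * n - 1) → Finset (A × B))
    (hcard : ∀ i, (M i).card = n) (hmatch : ∀ i, IsMatching (M i)) :
    HasRainbowMatching M n := by
  classical
  by_contra hn
  have hn1 : 1 ≤ n := by
    rcases Nat.eq_zero_or_pos n with h | h
    · subst h; exact absurd (hasRM_zero M) hn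
    · exact h
  have hNn : n ≤ 2 * n - 1 := by omega
  set s := Nat.findGreatest (fun t => HasRainbowMatching M t) (2 * n - 1) with hs
  have hs0 : HasRainbowMatching M s :=
    Nat.findGreatest_spec (Nat.zero_le _) (hasRM_zero M)
  have hsn : s < n := by
    by_contra h
    push_neg at h
    exact hn (hasRM_mono hs0 h)
  have hmax : ¬ HasRainbowMatching M (s + 1) := by
    apply Nat.findGreatest_is_greatest (P := fun t => HasRainbowMatching M t)
      (n := 2 * n - 1) (k := s + 1)
    · rw [← hs]; omega
    · omega
  obtain ⟨S, hScard, hSmem, hSdist⟩ := finset_of_hasRM hs0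
  -- unused colors
  have himgcard : (S.image Prod.fst).card = s := by
    rw [Finset.card_image_of_injOn, hScard]
    intro p hp q hq hpq
    by_contra hne
    exact (hSdist p hp q hq hne).1 hpq
  have hUcard : s + 1 ≤ (Finset.univ \ S.image Prod.fst).card := by
    rw [Finset.card_sdiff_of_subset (Finset.subset_univ _), himgcard, Finset.card_univ,
      Fintype.card_fin]
    omega
  obtain ⟨C, hCU, hCcard⟩ :=
    Finset.exists_subset_card_eq hUcard
  have hCun : ∀ c ∈ C, c ∉ S.image Prod.fst := fun c hc => (Finset.mem_sdiff.mp (hCU hc)).2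
  -- no edge of an unused color is free on both sides
  have hnowin : ∀ c ∈ C, ∀ e ∈ M c, ¬ (pA S e = none ∧ pB S e = none) := by
    rintro c hc e he ⟨hA, hB⟩
    apply hmax
    refine hasRM_of_finset (insert (c, e) S) ?_ ?_ ?_
    · rw [Finset.card_insert_of_notMem, hScard]
      intro hmem
      exact hCun c hc (Finset.mem_image_of_mem Prod.fst hmem)
    · intro p hp
      rcases Finset.mem_insert.mp hp with h | h
      · rw [h]; exact he
      · exact hSmem p h
    · have key : ∀ q ∈ S, (c, e).1 ≠ q.1 ∧ (c, e).2.1 ≠ q.2.1 ∧ (c, e).2.2 ≠ q.2.2 := by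
        intro q hq
        refine ⟨?_, ?_, ?_⟩
        · intro h
          apply hCun c hc
          rw [show c = q.1 from h]
          exact Finset.mem_image_of_mem Prod.fst hq
        · exact fun h => pA_none hA q hq h.symm
        · exact fun h => pB_none hB q hq h.symm
      intro p hp q hq hpq
      rcases Finset.mem_insert.mp hp with h | h <;> rcases Finset.mem_insert.mp hq with h' | h'
      · exact absurd (h.trans h'.symm) hpq
      · rw [h]; exact key q h'
      · rw [h']
        obtain ⟨k1, k2, k3⟩ := key p h
        exact ⟨k1.symm, k2.symm, k3.symm⟩
      · exact hSdist p h q h' hpq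
  -- the abstract digraph instance
  have hinjE : ∀ c ∈ C, Set.InjOn (fun e => (pA S e, pB S e)) ((M c : Set (A × B))) := by
    intro c hc e he f hf heq
    have h1 : pA S e = pA S f := congrArg Prod.fst heq
    have h2 : pB S e = pB S f := congrArg Prod.snd heq
    by_contra hne
    have hco := hmatch c e he f hf hne
    cases hA : pA S e with
    | some p =>
      have hpe := pA_some hA
      have hpf := pA_some (h1 ▸ hA)
      exact hco.1 (hpe.2.symm.trans hpf.2)
    | none =>
      cases hB : pB S e with
      | some p =>
        have hpe := pB_some hB
        have hpf := pB_some (h2 ▸ hB)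
        exact hco.2 (hpe.2.symm.trans hpf.2)
      | none => exact hnowin c hc e he ⟨hA, hB⟩
  have hEcard : ∀ c ∈ C, s + 1 ≤ (Edges S M c).card := by
    intro c hc
    rw [Edges, Finset.card_image_of_injOn (hinjE c hc), hcard c]
    omega
  have hEV : ∀ c ∈ C, ∀ x ∈ Edges S M c, ∀ v : Fin (2 * n - 1) × A × B,
      (x.1 = some v → v ∈ S) ∧ (x.2 = some v → v ∈ S) := by
    intro c hc x hx v
    obtain ⟨e, he, rfl⟩ := Finset.mem_image.mp hx
    exact ⟨fun h => (pA_some h).1, fun h => (pB_some h).1⟩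
  have hEout : ∀ c ∈ C, ∀ x ∈ Edges S M c, ∀ y ∈ Edges S M c,
      x.1 = y.1 → x.1 ≠ none → x = y := by
    intro c hc x hx y hy hxy hxn
    obtain ⟨e, he, rfl⟩ := Finset.mem_image.mp hx
    obtain ⟨f, hf, rfl⟩ := Finset.mem_image.mp hy
    simp only at hxy hxn
    cases hA : pA S e with
    | none => exact absurd hA hxn
    | some p =>
      have hp := pA_some hA
      have hfp : pA S f = some p := hxy ▸ hA
      have hq := pA_some hfp
      by_cases hef : e = f
      · rw [hef, hfp]
      · exact absurd (hp.2.symm.trans hq.2) (hmatch c e he f hf hef).1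
  have hEin : ∀ c ∈ C, ∀ x ∈ Edges S M c, ∀ y ∈ Edges S M c,
      x.2 = y.2 → x.2 ≠ none → x = y := by
    intro c hc x hx y hy hxy hxn
    obtain ⟨e, he, rfl⟩ := Finset.mem_image.mp hx
    obtain ⟨f, hf, rfl⟩ := Finset.mem_image.mp hy
    simp only at hxy hxn
    cases hB : pB S e with
    | none => exact absurd hB hxn
    | some p =>
      have hp := pB_some hB
      have hfp : pB S f = some p := hxy ▸ hB
      have hq := pB_some hfp
      by_cases hef : e = f
      · rw [hef, hfp]
      · exact absurd (hp.2.symm.trans hq.2) (hmatch c e he f hf hef).2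
  obtain ⟨l, cl, hlnodup, hclnodup, hlV, hclC, hpath⟩ :=
    abstract_path s S C (Edges S M) hScard hCcard hEcard hEV hEout hEin
  obtain ⟨T, afree, bfree, hTcard, hTmemM, hTmemcl, hTdist, hTimgA, hTafree, hTimgB, hTbfree⟩ :=
    build_T S M hSdist l cl none hpath hlnodup hlV hclnodup
      (fun p hp => by cases hp)
  have hafree : ∀ r ∈ S, r.2.1 ≠ afree := hTafree rfl
  have hTimgA' : T.image (fun q => q.2.1) =
      insert afree (l.toFinset.image (fun p => p.2.1)) := hTimgA
  -- assemble the bigger rainbow matching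
  have hltf : l.toFinset ⊆ S := fun p hp => hlV p (List.mem_toFinset.mp hp)
  have hltfcard : l.toFinset.card = l.length := List.toFinset_card_of_nodup hlnodup
  have hksle : l.length ≤ s := by
    rw [← hltfcard, ← hScard]
    exact Finset.card_le_card hltf
  have hdisj : Disjoint (S \ l.toFinset) T := by
    rw [Finset.disjoint_left]
    intro q hq hqT
    have h1 : q ∈ S := (Finset.mem_sdiff.mp hq).1
    exact hCun q.1 (hclC q.1 (hTmemcl q hqT)) (Finset.mem_image_of_mem Prod.fst h1)
  apply hmax
  refine hasRM_of_finset ((S \ l.toFinset) ∪ T) ?_ ?_ ?_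
  · rw [Finset.card_union_of_disjoint hdisj, Finset.card_sdiff_of_subset hltf, hScard, hltfcard,
      hTcard]
    omega
  · intro p hp
    rcases Finset.mem_union.mp hp with h | h
    · exact hSmem p (Finset.mem_sdiff.mp h).1
    · exact hTmemM p h
  · have aux : ∀ q ∈ S \ l.toFinset, ∀ q' ∈ T,
        q.1 ≠ q'.1 ∧ q.2.1 ≠ q'.2.1 ∧ q.2.2 ≠ q'.2.2 := by
      intro q hq q' hq'
      obtain ⟨hqS, hqnl⟩ := Finset.mem_sdiff.mp hq
      refine ⟨?_, ?_, ?_⟩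
      · intro h
        apply hCun q'.1 (hclC _ (hTmemcl q' hq'))
        rw [← h]
        exact Finset.mem_image_of_mem Prod.fst hqS
      · have hq'A : q'.2.1 ∈ insert afree (l.toFinset.image fun p => p.2.1) := by
          rw [← hTimgA']
          exact Finset.mem_image_of_mem _ hq'
        rcases Finset.mem_insert.mp hq'A with h | h
        · rw [h]
          exact hafree q hqS
        · obtain ⟨r, hr, hre⟩ := Finset.mem_image.mp h
          have hrS : r ∈ S := hltf hr
          have hqr : q ≠ r := fun hh => hqnl (hh ▸ hr)
          rw [← hre]
          exact (hSdist q hqS r hrS hqr).2.1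
      · have hq'B : q'.2.2 ∈ insert bfree (l.toFinset.image fun p => p.2.2) := by
          rw [← hTimgB]
          exact Finset.mem_image_of_mem _ hq'
        rcases Finset.mem_insert.mp hq'B with h | h
        · rw [h]
          exact hTbfree q hqS
        · obtain ⟨r, hr, hre⟩ := Finset.mem_image.mp h
          have hrS : r ∈ S := hltf hr
          have hqr : q ≠ r := fun hh => hqnl (hh ▸ hr)
          rw [← hre]
          exact (hSdist q hqS r hrS hqr).2.2
    intro p hp q hq hpq
    rcases Finset.mem_union.mp hp with h | h <;> rcases Finset.mem_union.mp hq with h' | h'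
    · exact hSdist p (Finset.mem_sdiff.mp h).1 q (Finset.mem_sdiff.mp h').1 hpq
    · exact aux p h q h'
    · obtain ⟨k1, k2, k3⟩ := aux q h' p h
      exact ⟨k1.symm, k2.symm, k3.symm⟩
    · exact hTdist p h q h' hpq
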